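/- For every real number x with 0 ≤ x ≤ 5.78, one has sin(x) ≥ x − x³/3! + x⁵/5! − x⁷/7! + x⁹/482800. -/

import Mathlib

open Real
open scoped Nat Topology

set_option maxHeartbeats 1000000 in
lemma poly_aux (t : ℝ) (ht0 : 0 ≤ t) (ht1 : t ≤ 33.4084) :
    1/362880 - t/39916800 + t^2/6227020800 - t^3/1307674368000
      + t^4/355687428096000 - t^5/121645100408832000 ≥ 1/482800 := by
  nlinarith [sq_nonneg t, sq_nonneg (t - 33.4084), mul_nonneg ht0 ht0,
    mul_nonneg (mul_nonneg ht0 ht0) ht0,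
    mul_nonneg (sub_nonneg.mpr ht1) ht0,
    mul_nonneg (mul_nonneg (sub_nonneg.mpr ht1) ht0) ht0,
    mul_nonneg (mul_nonneg (mul_nonneg (sub_nonneg.mpr ht1) ht0) ht0) ht0,
    mul_nonneg (mul_nonneg (mul_nonneg (mul_nonneg (sub_nonneg.mpr ht1) ht0) ht0) ht0) ht0,
    mul_nonneg (mul_nonneg (sub_nonneg.mpr ht1) (sub_nonneg.mpr ht1)) ht0,
    mul_nonneg (mul_nonneg (mul_nonneg (sub_nonneg.mpr ht1) (sub_nonneg.mpr ht1)) ht0) ht0]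

set_option maxHeartbeats 1000000 in
theorem stmt_8 (x : ℝ) (hx0 : 0 ≤ x) (hx1 : x ≤ 5.78) :
    Real.sin x ≥ x - x ^ 3 / 6 + x ^ 5 / 120 - x ^ 7 / 5040 + x ^ 9 / 482800 := by
  have ht0 : (0:ℝ) ≤ x ^ 2 := sq_nonneg x
  have ht1 : x ^ 2 ≤ 33.4084 := by nlinarith
  have hs := Real.hasSum_sin x
  -- tail from index 10
  have hs10 : HasSum (fun n : ℕ => (-1 : ℝ) ^ (n + 10) * x ^ (2 * (n + 10) + 1) / ((2 * (n + 10) + 1)! : ℝ))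
      (Real.sin x - ∑ i ∈ Finset.range 10, (-1 : ℝ) ^ i * x ^ (2 * i + 1) / ((2 * i + 1)! : ℝ)) := by
    exact (hasSum_nat_add_iff' (f := fun n : ℕ => (-1 : ℝ) ^ n * x ^ (2 * n + 1) / ((2 * n + 1)! : ℝ)) 10).mpr hs
  have hg : Antitone (fun n : ℕ => x ^ (2 * n + 21) / ((2 * n + 21)! : ℝ)) := by
    refine antitone_nat_of_succ_le (fun n => ?_)
    have hfac : ((2 * (n + 1) + 21)! : ℝ) = ((2 * n + 23) * (2 * n + 22)) * ((2 * n + 21)! : ℝ) := by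
      have h1 : 2 * (n + 1) + 21 = (2 * n + 22) + 1 := by ring
      rw [h1, Nat.factorial_succ]
      have h2 : 2 * n + 22 = (2 * n + 21) + 1 := by ring
      rw [h2, Nat.factorial_succ]
      push_cast
      ring
    have hpow : x ^ (2 * (n + 1) + 21) = x ^ (2 * n + 21) * x ^ 2 := by
      rw [show 2 * (n + 1) + 21 = (2 * n + 21) + 2 from by ring, pow_add]
    rw [hfac, hpow]
    have hfp : (0:ℝ) < ((2 * n + 21)! : ℝ) := by
      exact_mod_cast Nat.factorial_pos _
    have hn : (0:ℝ) ≤ (n:ℝ) := Nat.cast_nonneg n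
    have h1 : (0:ℝ) < ((2:ℝ) * n + 23) * (2 * n + 22) := by nlinarith
    have hfp2 : (0:ℝ) < ((2 * n + 23) * (2 * n + 22)) * ((2 * n + 21)! : ℝ) := mul_pos h1 hfp
    rw [div_le_div_iff₀ hfp2 hfp]
    have hxp : (0:ℝ) ≤ x ^ (2 * n + 21) := pow_nonneg hx0 _
    have h506 : x ^ 2 ≤ ((2:ℝ) * n + 23) * (2 * n + 22) := by nlinarith
    calc x ^ (2 * n + 21) * x ^ 2 * ((2 * n + 21)! : ℝ)
        ≤ x ^ (2 * n + 21) * (((2:ℝ) * n + 23) * (2 * n + 22)) * ((2 * n + 21)! : ℝ) := by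
          apply mul_le_mul_of_nonneg_right _ hfp.le
          exact mul_le_mul_of_nonneg_left h506 hxp
      _ = x ^ (2 * n + 21) * (((2:ℝ) * n + 23) * (2 * n + 22) * ((2 * n + 21)! : ℝ)) := by ring
  have htend : Filter.Tendsto
      (fun n : ℕ => ∑ i ∈ Finset.range n, (-1 : ℝ) ^ i * (x ^ (2 * i + 21) / ((2 * i + 21)! : ℝ)))
      Filter.atTop
      (𝓝 (Real.sin x - ∑ i ∈ Finset.range 10, (-1 : ℝ) ^ i * x ^ (2 * i + 1) / ((2 * i + 1)! : ℝ))) := by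
    have := hs10.tendsto_sum_nat
    convert this using 2 with n
    apply Finset.sum_congr rfl
    intro i _
    have h1 : (-1 : ℝ) ^ (i + 10) = (-1 : ℝ) ^ i := by
      rw [pow_add]; norm_num
    have h2 : 2 * (i + 10) + 1 = 2 * i + 21 := by ring
    rw [h1, h2]
    ring
  have htail : (0:ℝ) ≤ Real.sin x - ∑ i ∈ Finset.range 10, (-1 : ℝ) ^ i * x ^ (2 * i + 1) / ((2 * i + 1)! : ℝ) := by
    have := hg.alternating_series_le_tendsto htend 0
    simpa only [mul_zero, Finset.range_zero, Finset.sum_empty] using this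
  have hsum : ∑ i ∈ Finset.range 10, (-1 : ℝ) ^ i * x ^ (2 * i + 1) / ((2 * i + 1)! : ℝ)
      = x - x^3/6 + x^5/120 - x^7/5040 + x^9/362880 - x^11/39916800 + x^13/6227020800
        - x^15/1307674368000 + x^17/355687428096000 - x^19/121645100408832000 := by
    simp [Finset.sum_range_succ, Nat.factorial]
    norm_num
    ring
  rw [hsum] at htail
  have hkey := poly_aux (x ^ 2) ht0 ht1
  have hx9 : (0:ℝ) ≤ x ^ 9 := by positivity
  have hmul : x ^ 9 * (1/362880 - x^2/39916800 + (x^2)^2/6227020800 - (x^2)^3/1307674368000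
      + (x^2)^4/355687428096000 - (x^2)^5/121645100408832000) ≥ x ^ 9 * (1/482800) :=
    mul_le_mul_of_nonneg_left hkey hx9
  nlinarith [hmul, htail]
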